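/- Let C and V be partial orders and (φ, ψ) a Galois connection between them (φ(c) ≤ v ⇔ c ≤ ψ(v)); set ♭ = φ∘ψ and let J be the quantization Grothendieck topology on V (a sieve on v covers iff it contains ♭(v) ⟶ v). Let g : V ⥤ C be the functor induced by ψ. Then for every presheaf P : C^op ⥤ Type, the presheaf ψ*P := g.op ⋙ P (so (ψ*P)(v) = P(ψ(v))) is a sheaf for J. -/

import Mathlib

open CategoryTheory

/-- The quantization Grothendieck topology on a partial order `V` induced by a
monotone idempotent deflation `♭ : V → V`: a sieve on `v` covers iff it contains
the morphism `♭(v) ⟶ v`. -/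
def quantTopology {V : Type*} [PartialOrder V] {b : V → V} (hb : Monotone b)
    (hle : ∀ v, b v ≤ v) (hidem : ∀ v, b (b v) = b v) :
    GrothendieckTopology V where
  sieves v := { S | S.arrows (homOfLE (hle v)) }
  top_mem' v := trivial
  pullback_stable' := by
    intro v v' S f hS
    exact S.downward_closed hS (homOfLE (hb (leOfHom f)))
  transitive' := by
    intro v S hS R hR
    have key : ∀ {x y : V} (_ : x = y) (hx : x ≤ v) (hy : y ≤ v),
        R.arrows (homOfLE hx) → R.arrows (homOfLE hy) := by
      rintro x y rfl hx hy h
      exact h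
    exact key (hidem v) ((hle (b v)).trans (hle v)) (hle v) (hR hS)

section Aux

variable {C : Type*} [PartialOrder C] (P : Cᵒᵖ ⥤ Type*)

/-- Transport along an equality of objects. -/
def castP {a b : C} (e : a = b) : P.obj (Opposite.op a) → P.obj (Opposite.op b) :=
  fun z => cast (congrArg (fun c => P.obj (Opposite.op c)) e) z

lemma map_eq_castP {a b : C} (f : a ⟶ b) (e : a = b) (z : P.obj (Opposite.op b)) :
    P.map f.op z = castP P e.symm z := by
  subst e
  have : f = 𝟙 a := Subsingleton.elim _ _
  subst this
  simp [castP]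

lemma castP_castP {a b c : C} (e : a = b) (e' : b = c) (z : P.obj (Opposite.op a)) :
    castP P e' (castP P e z) = castP P (e.trans e') z := by
  subst e; subst e'; rfl

lemma castP_map {a₁ b₁ a₂ b₂ : C} (f₁ : a₁ ⟶ b₁) (f₂ : a₂ ⟶ b₂)
    (ea : a₁ = a₂) (eb : b₁ = b₂) (z : P.obj (Opposite.op b₁)) :
    castP P ea (P.map f₁.op z) = P.map f₂.op (castP P eb z) := by
  subst ea; subst eb
  have : f₁ = f₂ := Subsingleton.elim _ _
  subst this
  rfl

end Aux

/-- Let `(φ, ψ)` be a Galois connection between partial orders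
`C` and `V`, `♭ = φ ∘ ψ`, and `J` the quantization Grothendieck topology on `V`.
Then for every presheaf `P : Cᵒᵖ ⥤ Type`, the presheaf `ψ*P = g.op ⋙ P` (so
`(ψ*P)(v) = P(ψ v)`) is a sheaf for `J`. -/
theorem isSheaf_psiStar.{w, u, u'}
    {C : Type u} {V : Type u'} [PartialOrder C] [PartialOrder V]
    {φ : C → V} {ψ : V → C} (gc : GaloisConnection φ ψ)
    (P : Cᵒᵖ ⥤ Type w) :
    Presieve.IsSheaf
      (quantTopology (gc.monotone_l.comp gc.monotone_u) gc.l_u_le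
        (fun v => congrArg φ (gc.u_l_u_eq_u v)))
      (gc.monotone_u.functor.op ⋙ P) := by
  intro v S hS x hx
  have hS' : S.arrows (homOfLE (gc.l_u_le v)) := hS
  let g := gc.monotone_u.functor
  let m : φ (ψ v) ⟶ v := homOfLE (gc.l_u_le v)
  have ev : ψ (φ (ψ v)) = ψ v := gc.u_l_u_eq_u v
  refine ⟨castP P ev (x m hS'), ?_, ?_⟩
  · intro w f hf
    -- auxiliary morphisms
    have hbw : φ (ψ w) ≤ w := gc.l_u_le w
    have hbwv : φ (ψ w) ≤ φ (ψ v) := gc.monotone_l (gc.monotone_u (leOfHom f))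
    let g₁ : φ (ψ w) ⟶ w := homOfLE hbw
    let g₂ : φ (ψ w) ⟶ φ (ψ v) := homOfLE hbwv
    have ew : ψ (φ (ψ w)) = ψ w := gc.u_l_u_eq_u w
    have hcomp : g₁ ≫ f = g₂ ≫ m := Subsingleton.elim _ _
    have hcompat := hx g₁ g₂ hf hS' hcomp
    -- rewrite both sides via castP
    show P.map (g.map f).op (castP P ev (x m hS')) = x f hf
    erw [← castP_map P (g.map g₂) (g.map f) ew ev (x m hS')]
    have h2 : P.map (g.map g₂).op (x m hS') = P.map (g.map g₁).op (x f hf) := hcompat.symm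
    erw [h2, map_eq_castP P (g.map g₁) ew (x f hf), castP_castP]
    simp [castP]
  · intro t' ht'
    have h := ht' m hS'
    have h' : P.map (g.map m).op t' = x m hS' := h
    rw [map_eq_castP P (g.map m) ev t'] at h'
    erw [← h', castP_castP]
    exact (cast_eq _ _).symm
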